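/- Let φ : ℂ → ℂ be an entire function whose Taylor expansion at 0 is φ(z) = Σ_{n=0}^∞ aₙ zⁿ for all z ∈ ℂ. Then ∫_ℂ |φ(z)|² e^{−|z|²} dA(z) = π · Σ_{n=0}^∞ n! |aₙ|², where both sides are interpreted in [0,∞] (either both are infinite or both are finite and equal). -/

import Mathlib

open MeasureTheory Real Set Complex ContinuousMap AddCircle
open scoped ENNReal

theorem lintegral_comp_polarCoord_symm' (g : ℝ × ℝ → ENNReal) :
    ∫⁻ p, g p = ∫⁻ p in polarCoord.target, ENNReal.ofReal p.1 * g (polarCoord.symm p) := by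
  set B : ℝ × ℝ → ℝ × ℝ →L[ℝ] ℝ × ℝ := fun p =>
    LinearMap.toContinuousLinearMap (Matrix.toLin (Module.Basis.finTwoProd ℝ) (Module.Basis.finTwoProd ℝ)
      !![Real.cos p.2, -p.1 * Real.sin p.2; Real.sin p.2, p.1 * Real.cos p.2])
  have A : ∀ p ∈ polarCoord.target, HasFDerivWithinAt polarCoord.symm (B p) polarCoord.target p :=
    fun p _ => (hasFDerivAt_polarCoord_symm p).hasFDerivWithinAt
  have B_det : ∀ p, (B p).det = p.1 := by
    intro p
    conv_rhs => rw [← one_mul p.1, ← Real.cos_sq_add_sin_sq p.2]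
    simp only [B, neg_mul, LinearMap.det_toContinuousLinearMap, LinearMap.det_toLin,
      Matrix.det_fin_two_of, sub_neg_eq_add]
    ring
  have hinj : Set.InjOn polarCoord.symm polarCoord.target := polarCoord.symm.injOn
  have himg : polarCoord.symm '' polarCoord.target = polarCoord.source :=
    polarCoord.symm_image_target_eq_source
  calc ∫⁻ p, g p = ∫⁻ p in polarCoord.source, g p := by
        rw [← setLIntegral_univ]
        exact (setLIntegral_congr polarCoord_source_ae_eq_univ.symm)
    _ = ∫⁻ p in polarCoord.symm '' polarCoord.target, g p := by rw [himg]
    _ = ∫⁻ p in polarCoord.target, ENNReal.ofReal |(B p).det| * g (polarCoord.symm p) := by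
        exact lintegral_image_eq_lintegral_abs_det_fderiv_mul volume
          (polarCoord.open_target.measurableSet) A hinj g
    _ = ∫⁻ p in polarCoord.target, ENNReal.ofReal p.1 * g (polarCoord.symm p) := by
        refine setLIntegral_congr_fun polarCoord.open_target.measurableSet
          (fun p hp => ?_)
        rw [B_det, abs_of_pos hp.1]

theorem Complex.lintegral_comp_polarCoord_symm' (g : ℂ → ENNReal) :
    ∫⁻ z, g z = ∫⁻ p in Set.Ioi (0:ℝ) ×ˢ Set.Ioo (-π) π,
      ENNReal.ofReal p.1 * g (Complex.polarCoord.symm p) := by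
  rw [← Complex.volume_preserving_equiv_real_prod.symm _|>.map_eq,
    lintegral_map_equiv (fun z => g z) Complex.measurableEquivRealProd.symm,
    _root_.lintegral_comp_polarCoord_symm' (fun p : ℝ × ℝ => g (Complex.measurableEquivRealProd.symm p))]
  rfl

lemma coeff_geom_bound (φ : ℂ → ℂ) (a : ℕ → ℂ)
    (ha : ∀ z : ℂ, HasSum (fun n : ℕ => a n * z ^ n) (φ z)) (r : ℝ) (hr : 0 ≤ r) :
    ∃ C : ℝ, 0 ≤ C ∧ ∀ n : ℕ, ‖a n‖ * r ^ n ≤ C * (1/2) ^ n := by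
  set R : ℝ := 2 * r + 1 with hR
  have hR0 : 0 < R := by positivity
  have hs : Summable (fun n : ℕ => a n * ((R : ℂ)) ^ n) := ((ha (R : ℂ))).summable
  have ht : Filter.Tendsto (fun n : ℕ => ‖a n * (R:ℂ) ^ n‖) Filter.atTop (nhds 0) := by
    simpa using hs.tendsto_atTop_zero.norm
  obtain ⟨C, hC⟩ := ht.bddAbove_range
  have hC' : ∀ n : ℕ, ‖a n‖ * R ^ n ≤ C := by
    intro n
    have := hC (Set.mem_range_self (f := fun n : ℕ => ‖a n * (R:ℂ) ^ n‖) n)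
    simpa [norm_mul, norm_pow, Complex.norm_real, abs_of_pos hR0] using this
  refine ⟨C, le_trans (by positivity) ((by simpa using hC' 0 : ‖a 0‖ ≤ C)), fun n => ?_⟩
  have h1 : r ^ n = R ^ n * (r / R) ^ n := by
    rw [← mul_pow]; congr 1; field_simp
  have h2 : (r / R) ^ n ≤ (1/2 : ℝ) ^ n := by
    apply pow_le_pow_left₀ (by positivity)
    rw [div_le_div_iff₀ hR0 (by norm_num)]
    linarith
  calc ‖a n‖ * r ^ n = ‖a n‖ * R ^ n * (r / R) ^ n := by rw [h1]; ring
    _ ≤ C * (1/2) ^ n := by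
        apply mul_le_mul (hC' n) h2 (by positivity)
        exact le_trans (by positivity : (0:ℝ) ≤ ‖a 0‖ * R ^ 0) (hC' 0)

lemma summable_norm_mul_pow (φ : ℂ → ℂ) (a : ℕ → ℂ)
    (ha : ∀ z : ℂ, HasSum (fun n : ℕ => a n * z ^ n) (φ z)) (r : ℝ) (hr : 0 ≤ r) :
    Summable (fun n : ℕ => ‖a n‖ * r ^ n) := by
  obtain ⟨C, hC0, hC⟩ := coeff_geom_bound φ a ha r hr
  exact Summable.of_nonneg_of_le (fun n => by positivity) hC
    ((summable_geometric_of_lt_one (by norm_num) (by norm_num)).mul_left C)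

lemma summable_sq_mul_pow (φ : ℂ → ℂ) (a : ℕ → ℂ)
    (ha : ∀ z : ℂ, HasSum (fun n : ℕ => a n * z ^ n) (φ z)) (r : ℝ) (hr : 0 ≤ r) :
    Summable (fun n : ℕ => ‖a n‖ ^ 2 * r ^ (2 * n)) := by
  obtain ⟨C, hC0, hC⟩ := coeff_geom_bound φ a ha r hr
  refine Summable.of_nonneg_of_le (fun n => by positivity) (fun n => ?_)
    ((summable_geometric_of_lt_one (by norm_num) (by norm_num : (1/4:ℝ) < 1)).mul_left (C^2))
  have h1 : ‖a n‖ ^ 2 * r ^ (2 * n) = (‖a n‖ * r ^ n) ^ 2 := by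
    rw [mul_pow, ← pow_mul, mul_comm n 2]
  have h2 : (‖a n‖ * r ^ n) ^ 2 ≤ (C * (1/2)^n) ^ 2 :=
    pow_le_pow_left₀ (by positivity) (hC n) 2
  rw [h1]
  calc (‖a n‖ * r ^ n) ^ 2 ≤ (C * (1/2)^n)^2 := h2
    _ = C^2 * (1/4:ℝ)^n := by
        rw [mul_pow, ← pow_mul, mul_comm n 2, pow_mul]
        norm_num

section circle
variable (φ : ℂ → ℂ) (a : ℕ → ℂ)
  (ha : ∀ z : ℂ, HasSum (fun n : ℕ => a n * z ^ n) (φ z))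

-- assume summability facts as hypotheses for now
include ha in
lemma circle_parseval (r : ℝ) (hr : 0 ≤ r)
    (hs1 : Summable (fun n : ℕ => ‖a n‖ * r ^ n)) :
    ∫⁻ θ in Set.Ioc (-π) π, ENNReal.ofReal (‖φ (r * Complex.exp (θ * Complex.I))‖ ^ 2)
      = ENNReal.ofReal (2 * π) * ENNReal.ofReal (∑' n : ℕ, ‖a n‖ ^ 2 * r ^ (2 * n)) := by
  haveI : Fact (0 < 2 * π) := ⟨by positivity⟩
  -- the ℤ-indexed coefficients
  set c : ℤ → ℂ := fun m => if 0 ≤ m then a m.toNat * (r : ℂ) ^ m.toNat else 0 with hc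
  have hcn : ∀ n : ℕ, c (n : ℤ) = a n * (r : ℂ) ^ n := by
    intro n; simp [hc]
  have hinj : Function.Injective ((↑) : ℕ → ℤ) := Nat.cast_injective
  have hc0 : ∀ m : ℤ, m ∉ Set.range ((↑) : ℕ → ℤ) → c m = 0 := by
    intro m hm
    have : ¬ (0 ≤ m) := by
      intro h
      exact hm ⟨m.toNat, Int.toNat_of_nonneg h⟩
    simp [hc, this]
  have hnormn : ∀ n : ℕ, ‖c (n : ℤ)‖ = ‖a n‖ * r ^ n := by
    intro n
    rw [hcn, norm_mul, norm_pow, Complex.norm_real, Real.norm_eq_abs, _root_.abs_of_nonneg hr]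
  have hsumcZ : Summable (fun m : ℤ => ‖c m‖) := by
    rw [← hinj.summable_iff (by intro m hm; simp [hc0 m hm])]
    exact hs1.congr (fun n => (hnormn n).symm)
  -- the continuous function G
  have hFs : Summable (fun m : ℤ => c m • fourier m (T := 2 * π)) := by
    apply Summable.of_norm
    simpa only [norm_smul, fourier_norm, mul_one] using hsumcZ
  set G : C(AddCircle (2 * π), ℂ) := ∑' m : ℤ, c m • fourier m with hGdef
  have hG : HasSum (fun m : ℤ => c m • fourier m) G := hFs.hasSum
  have hGpt : ∀ x : AddCircle (2 * π), HasSum (fun m : ℤ => c m * fourier m x) (G x) := by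
    intro x
    have := (ContinuousMap.evalCLM ℂ x).hasSum hG
    simpa using this
  -- orthogonality
  have horth : ∀ j : ℤ, (∫ t : AddCircle (2 * π), fourier j t ∂haarAddCircle)
      = if j = 0 then 1 else 0 := by
    intro j
    split_ifs with h
    · subst h
      simp only [fourier_zero]
      simp
    · exact integral_eq_zero_of_add_right_eq_neg (μ := haarAddCircle)
        (fourier_add_half_inv_index h Fact.out)
  -- Fourier coefficients of G
  have hcoeff : ∀ m : ℤ, fourierCoeff (⇑G) m = c m := by
    intro m
    have hrw : ∀ t : AddCircle (2 * π),
        fourier (-m) t • G t = ∑' k : ℤ, c k * (fourier (-m) t * fourier k t) := by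
      intro t
      have h1 : HasSum (fun k : ℤ => fourier (-m) t * (c k * fourier k t))
          (fourier (-m) t * G t) := (hGpt t).mul_left _
      rw [smul_eq_mul, ← h1.tsum_eq]
      exact tsum_congr fun k => by ring
    rw [fourierCoeff]
    calc (∫ t : AddCircle (2 * π), fourier (-m) t • G t ∂haarAddCircle)
        = ∫ t : AddCircle (2 * π), ∑' k : ℤ, c k * (fourier (-m) t * fourier k t) ∂haarAddCircle :=
          integral_congr_ae (Filter.Eventually.of_forall hrw)
      _ = ∑' k : ℤ, ∫ t : AddCircle (2 * π), c k * (fourier (-m) t * fourier k t) ∂haarAddCircle := by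
          refine integral_tsum (fun k => ?_) ?_
          · exact (continuous_const.mul ((map_continuous _).mul (map_continuous _))).aestronglyMeasurable
          · have hpt : ∀ k : ℤ, ∀ t : AddCircle (2 * π),
                ‖c k * (fourier (-m) t * fourier k t)‖₊ = ‖c k‖₊ := by
              intro k t
              have e1 : ‖fourier (-m) t‖ = 1 := by
                simp [fourier_apply, Circle.norm_coe]
              have e2 : ‖fourier k t‖ = 1 := by
                simp [fourier_apply, Circle.norm_coe]
              ext
              simp [nnnorm, norm_mul, e1, e2, Circle.norm_coe]
            calc ∑' k : ℤ, ∫⁻ t, ‖c k * (fourier (-m) t * fourier k t)‖₊ ∂haarAddCircle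
                = ∑' k : ℤ, (‖c k‖₊ : ℝ≥0∞) := by
                  refine tsum_congr fun k => ?_
                  simp_rw [hpt k]
                  simp [lintegral_const]
              _ ≠ ⊤ := by
                  have hnn : Summable (fun m : ℤ => ‖c m‖₊) := by
                    rw [← NNReal.summable_coe]
                    simpa [coe_nnnorm] using hsumcZ
                  rw [← ENNReal.coe_tsum hnn]
                  exact ENNReal.coe_ne_top
      _ = ∑' k : ℤ, (if k = m then c m else 0) := by
          refine tsum_congr fun k => ?_
          rw [integral_const_mul]
          have : ∀ t : AddCircle (2 * π), fourier (-m) t * fourier k t = fourier (-m + k) t := by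
            intro t; rw [fourier_add]
          rw [integral_congr_ae (Filter.Eventually.of_forall this), horth]
          have : (-m + k = 0) ↔ (k = m) := by omega
          simp only [this]
          split_ifs with h <;> simp [h]
      _ = c m := tsum_ite_eq m (fun _ => c m)
  -- Parseval
  have hGL2 := tsum_sq_fourierCoeff (ContinuousMap.toLp 2 haarAddCircle ℂ G)
  simp_rw [fourierCoeff_toLp] at hGL2
  have hRHS : (∫ t : AddCircle (2 * π), ‖(ContinuousMap.toLp 2 haarAddCircle ℂ G) t‖ ^ 2
      ∂haarAddCircle) = ∫ t : AddCircle (2 * π), ‖G t‖ ^ 2 ∂haarAddCircle := by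
    refine integral_congr_ae ?_
    filter_upwards [ContinuousMap.coeFn_toLp (E := ℂ) (p := 2) (μ := haarAddCircle) (𝕜 := ℂ) G] with t ht
    rw [ht]
  have hPar : (∑' m : ℤ, ‖c m‖ ^ 2) = ∫ t : AddCircle (2 * π), ‖G t‖ ^ 2 ∂haarAddCircle := by
    rw [← hRHS, ← hGL2]
    exact tsum_congr fun m => by rw [hcoeff]
  have hsum2 : (∑' m : ℤ, ‖c m‖ ^ 2) = ∑' n : ℕ, ‖a n‖ ^ 2 * r ^ (2 * n) := by
    rw [← hinj.tsum_eq (f := fun m : ℤ => ‖c m‖ ^ 2) (by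
      intro m hm
      rcases le_or_gt 0 m with h | h
      · exact ⟨m.toNat, Int.toNat_of_nonneg h⟩
      · exact absurd (show ‖c m‖ ^ 2 = 0 by simp [hc, not_le.mpr h]) hm)]
    refine tsum_congr fun n => ?_
    rw [hnormn n, mul_pow, ← pow_mul, mul_comm n 2]
  have hfour : ∀ (n : ℕ) (θ : ℝ),
      fourier (n : ℤ) (θ : AddCircle (2 * π)) = Complex.exp (θ * Complex.I) ^ n := by
    intro n θ
    rw [fourier_coe_apply, ← Complex.exp_nat_mul]
    congr 1
    have hπ : (π : ℂ) ≠ 0 := Complex.ofReal_ne_zero.mpr Real.pi_ne_zero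
    push_cast
    field_simp
  have hGθ : ∀ θ : ℝ, G (θ : AddCircle (2 * π)) = φ (r * Complex.exp (θ * Complex.I)) := by
    intro θ
    have hfe : (fun n : ℕ => c (n : ℤ) * fourier (n : ℤ) (θ : AddCircle (2 * π)))
        = fun n : ℕ => a n * (r * Complex.exp (θ * Complex.I)) ^ n := by
      funext n
      rw [hcn, hfour, mul_pow]
      ring
    have h1 : HasSum (fun n : ℕ => c (n : ℤ) * fourier (n : ℤ) (θ : AddCircle (2 * π)))
        (φ (r * Complex.exp (θ * Complex.I))) := by
      rw [hfe]; exact ha _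
    have h2 : HasSum (fun m : ℤ => c m * fourier m (θ : AddCircle (2 * π)))
        (φ (r * Complex.exp (θ * Complex.I))) := by
      refine (hinj.hasSum_iff ?_).mp h1
      intro m hm
      simp [hc0 m hm]
    exact (hGpt _).unique h2
  have hInt : Integrable (fun t : AddCircle (2 * π) => ‖G t‖ ^ 2) haarAddCircle :=
    Continuous.integrable_of_hasCompactSupport ((map_continuous G).norm.pow 2)
      (HasCompactSupport.of_compactSpace _)
  have hofReal : ENNReal.ofReal (∫ t : AddCircle (2 * π), ‖G t‖ ^ 2 ∂haarAddCircle)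
      = ∫⁻ t : AddCircle (2 * π), ENNReal.ofReal (‖G t‖ ^ 2) ∂haarAddCircle :=
    ofReal_integral_eq_lintegral_ofReal hInt (Filter.Eventually.of_forall fun t => by positivity)
  calc ∫⁻ θ in Set.Ioc (-π) π, ENNReal.ofReal (‖φ (r * Complex.exp (θ * Complex.I))‖ ^ 2)
      = ∫⁻ θ in Set.Ioc (-π) (-π + 2 * π),
          (fun x : AddCircle (2 * π) => ENNReal.ofReal (‖G x‖ ^ 2)) (θ : AddCircle (2 * π)) := by
        rw [show -π + 2 * π = π by ring]
        refine setLIntegral_congr_fun measurableSet_Ioc ?_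
        intro θ _
        show ENNReal.ofReal (‖φ (↑r * Complex.exp (↑θ * Complex.I))‖ ^ 2)
          = ENNReal.ofReal (‖G (θ : AddCircle (2 * π))‖ ^ 2)
        rw [hGθ θ]
    _ = ∫⁻ x : AddCircle (2 * π), ENNReal.ofReal (‖G x‖ ^ 2) :=
        AddCircle.lintegral_preimage (2 * π) (-π) (fun x => ENNReal.ofReal (‖G x‖ ^ 2))
    _ = ENNReal.ofReal (2 * π)
          * ∫⁻ x : AddCircle (2 * π), ENNReal.ofReal (‖G x‖ ^ 2) ∂haarAddCircle := by
        rw [volume_eq_smul_haarAddCircle, lintegral_smul_measure, smul_eq_mul]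
    _ = ENNReal.ofReal (2 * π) * ENNReal.ofReal (∑' n : ℕ, ‖a n‖ ^ 2 * r ^ (2 * n)) := by
        rw [← hofReal, ← hPar, hsum2]
end circle

lemma radial_integral (n : ℕ) :
    ∫ r in Set.Ioi (0:ℝ), r ^ (2*n+1) * Real.exp (-r^2) = (n.factorial : ℝ) / 2 := by
  have h1 : ∀ r ∈ Set.Ioi (0:ℝ), r ^ (((2*n+1 : ℕ)) : ℝ) * Real.exp (- r ^ (2:ℝ))
      = r ^ (2*n+1) * Real.exp (-r^2) := by
    intro r hr
    rw [Real.rpow_natCast, Real.rpow_two]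
  rw [← setIntegral_congr_fun measurableSet_Ioi h1,
    _root_.integral_rpow_mul_exp_neg_rpow two_pos (lt_of_lt_of_le neg_one_lt_zero (by positivity))]
  have h2 : (((2*n+1 : ℕ):ℝ) + 1) / 2 = (n : ℝ) + 1 := by push_cast; ring
  rw [h2, Real.Gamma_nat_eq_factorial]
  ring

lemma integrableOn_radial (n : ℕ) :
    IntegrableOn (fun r : ℝ => r ^ (2*n+1) * Real.exp (-r^2)) (Set.Ioi 0) := by
  have := integrableOn_rpow_mul_exp_neg_mul_sq (b := 1) one_pos
    (s := ((2*n+1 : ℕ) : ℝ)) (lt_of_lt_of_le neg_one_lt_zero (by positivity))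
  refine this.congr_fun (fun r hr => ?_) measurableSet_Ioi
  dsimp only
  rw [Real.rpow_natCast, neg_one_mul]

open Filter in
/-- If `φ : ℂ → ℂ` is entire with Taylor expansion `φ(z) = ∑ aₙ zⁿ` at every point,
then `∫_ℂ |φ(z)|² e^{-|z|²} dA(z) = π ∑ n! |aₙ|²`, both sides in `[0, ∞]`. -/
theorem bargmann_norm_eq_sum_factorial (φ : ℂ → ℂ) (a : ℕ → ℂ)
    (hφ : Differentiable ℂ φ)
    (ha : ∀ z : ℂ, HasSum (fun n : ℕ => a n * z ^ n) (φ z)) :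
    (∫⁻ z : ℂ, ENNReal.ofReal (‖φ z‖ ^ 2 * Real.exp (-‖z‖ ^ 2))) =
      ENNReal.ofReal Real.pi *
        ∑' n : ℕ, ENNReal.ofReal ((n.factorial : ℝ) * ‖a n‖ ^ 2) := by
  have hπ : (0:ℝ) < π := Real.pi_pos
  set t : ℕ → ℝ → ℝ≥0∞ :=
    fun n r => ENNReal.ofReal (‖a n‖ ^ 2 * (r ^ (2*n+1) * Real.exp (-r^2))) with ht
  set F : ℝ × ℝ → ℝ≥0∞ := fun p => ENNReal.ofReal p.1 * ENNReal.ofReal (Real.exp (-p.1^2)) *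
    ENNReal.ofReal (‖φ ((p.1 : ℂ) * Complex.exp ((p.2 : ℂ) * Complex.I))‖ ^ 2) with hF
  have hcont1 : Continuous fun p : ℝ × ℝ => (p.1 : ℂ) * Complex.exp ((p.2 : ℂ) * Complex.I) := by
    continuity
  have hcontφ : Continuous
      fun p : ℝ × ℝ => ‖φ ((p.1 : ℂ) * Complex.exp ((p.2 : ℂ) * Complex.I))‖ ^ 2 :=
    (hφ.continuous.comp hcont1).norm.pow 2
  have hFm : Measurable F := by
    refine (Measurable.mul (M := ℝ≥0∞) ?_ ?_).mul (M := ℝ≥0∞) ?_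
    · exact measurable_fst.ennreal_ofReal
    · exact (Continuous.measurable (by continuity :
        Continuous fun p : ℝ × ℝ => Real.exp (-p.1^2))).ennreal_ofReal
    · exact hcontφ.measurable.ennreal_ofReal
  calc (∫⁻ z : ℂ, ENNReal.ofReal (‖φ z‖ ^ 2 * Real.exp (-‖z‖ ^ 2)))
      = ∫⁻ p in Set.Ioi (0:ℝ) ×ˢ Set.Ioo (-π) π, ENNReal.ofReal p.1 *
          ENNReal.ofReal (‖φ (Complex.polarCoord.symm p)‖ ^ 2 *
            Real.exp (-‖Complex.polarCoord.symm p‖ ^ 2)) :=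
      Complex.lintegral_comp_polarCoord_symm'
        (fun z => ENNReal.ofReal (‖φ z‖ ^ 2 * Real.exp (-‖z‖ ^ 2)))
    _ = ∫⁻ p in Set.Ioi (0:ℝ) ×ˢ Set.Ioo (-π) π, F p := by
      refine setLIntegral_congr_fun (measurableSet_Ioi.prod measurableSet_Ioo)
        ?_
      rintro ⟨r, θ⟩ ⟨hr, hθ⟩
      have hr' : (0:ℝ) < r := hr
      have hsymm : Complex.polarCoord.symm (r, θ)
          = (r : ℂ) * Complex.exp ((θ : ℂ) * Complex.I) := by
        rw [Complex.polarCoord_symm_apply, Complex.exp_mul_I, Complex.ofReal_cos,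
          Complex.ofReal_sin]
      have hnorm : ‖(r : ℂ) * Complex.exp ((θ : ℂ) * Complex.I)‖ = r := by
        rw [norm_mul, Complex.norm_real, Real.norm_eq_abs, _root_.abs_of_pos hr',
          Complex.norm_exp_ofReal_mul_I, mul_one]
      dsimp only
      rw [hsymm, hnorm, ENNReal.ofReal_mul (by positivity)]
      show _ = ENNReal.ofReal r * ENNReal.ofReal (Real.exp (-r^2)) *
        ENNReal.ofReal (‖φ ((r : ℂ) * Complex.exp ((θ : ℂ) * Complex.I))‖ ^ 2)
      ring
    _ = ∫⁻ r in Set.Ioi (0:ℝ), ∫⁻ θ in Set.Ioo (-π) π, F (r, θ) := by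
      rw [Measure.volume_eq_prod, ← Measure.prod_restrict, lintegral_prod _ hFm.aemeasurable]
    _ = ∫⁻ r in Set.Ioi (0:ℝ), ENNReal.ofReal (2*π) * ∑' n : ℕ, t n r := by
      refine setLIntegral_congr_fun measurableSet_Ioi ?_
      intro r hr
      have hr' : (0:ℝ) < r := hr
      have hS : ENNReal.ofReal (∑' n : ℕ, ‖a n‖ ^ 2 * r ^ (2*n))
          = ∑' n : ℕ, ENNReal.ofReal (‖a n‖ ^ 2 * r ^ (2*n)) :=
        ENNReal.ofReal_tsum_of_nonneg (fun n => by positivity)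
          (summable_sq_mul_pow φ a ha r hr'.le)
      calc ∫⁻ θ in Set.Ioo (-π) π, F (r, θ)
          = (ENNReal.ofReal r * ENNReal.ofReal (Real.exp (-r^2))) *
            ∫⁻ θ in Set.Ioo (-π) π,
              ENNReal.ofReal (‖φ ((r : ℂ) * Complex.exp ((θ : ℂ) * Complex.I))‖ ^ 2) := by
            rw [← lintegral_const_mul' _ _
              (ENNReal.mul_ne_top ENNReal.ofReal_ne_top ENNReal.ofReal_ne_top)]
        _ = (ENNReal.ofReal r * ENNReal.ofReal (Real.exp (-r^2))) *
            (ENNReal.ofReal (2 * π) *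
              ENNReal.ofReal (∑' n : ℕ, ‖a n‖ ^ 2 * r ^ (2 * n))) := by
            rw [Measure.restrict_congr_set Ioo_ae_eq_Ioc,
              circle_parseval φ a ha r hr'.le (summable_norm_mul_pow φ a ha r hr'.le)]
        _ = ENNReal.ofReal (2*π) * ∑' n : ℕ, t n r := by
            have hterm : ∀ n : ℕ, (ENNReal.ofReal r * ENNReal.ofReal (Real.exp (-r^2))) *
                ENNReal.ofReal (‖a n‖ ^ 2 * r ^ (2*n)) = t n r := by
              intro n
              rw [ht, ← ENNReal.ofReal_mul hr'.le, ← ENNReal.ofReal_mul (by positivity)]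
              congr 1
              ring
            calc (ENNReal.ofReal r * ENNReal.ofReal (Real.exp (-r^2))) *
                (ENNReal.ofReal (2 * π) *
                  ENNReal.ofReal (∑' n : ℕ, ‖a n‖ ^ 2 * r ^ (2 * n)))
                = ENNReal.ofReal (2*π) *
                    ((ENNReal.ofReal r * ENNReal.ofReal (Real.exp (-r^2))) *
                      ENNReal.ofReal (∑' n : ℕ, ‖a n‖ ^ 2 * r ^ (2 * n))) := by ring
              _ = ENNReal.ofReal (2*π) * ∑' n : ℕ,
                    (ENNReal.ofReal r * ENNReal.ofReal (Real.exp (-r^2))) *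
                      ENNReal.ofReal (‖a n‖ ^ 2 * r ^ (2 * n)) := by
                  rw [hS, ← ENNReal.tsum_mul_left]
              _ = ENNReal.ofReal (2*π) * ∑' n : ℕ, t n r := by rw [tsum_congr hterm]
    _ = ENNReal.ofReal (2*π) * ∑' n : ℕ, ∫⁻ r in Set.Ioi (0:ℝ), t n r := by
      rw [lintegral_const_mul' _ _ ENNReal.ofReal_ne_top, lintegral_tsum]
      intro n
      exact ((ENNReal.continuous_ofReal.comp (by continuity :
        Continuous fun r : ℝ => ‖a n‖ ^ 2 * (r ^ (2*n+1) * Real.exp (-r^2)))).measurable).aemeasurable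
    _ = ENNReal.ofReal Real.pi * ∑' n : ℕ, ENNReal.ofReal ((n.factorial : ℝ) * ‖a n‖ ^ 2) := by
      have hval : ∀ n : ℕ, ∫⁻ r in Set.Ioi (0:ℝ), t n r
          = ENNReal.ofReal (‖a n‖ ^ 2 * ((n.factorial : ℝ) / 2)) := by
        intro n
        rw [ht]
        rw [← ofReal_integral_eq_lintegral_ofReal
          (((integrableOn_radial n).const_mul (‖a n‖ ^ 2)))
          ((ae_restrict_iff' measurableSet_Ioi).2 (Filter.Eventually.of_forall
            fun r hr => by have : (0:ℝ) < r := hr; positivity))]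
        rw [integral_const_mul, radial_integral n]
      simp_rw [hval]
      rw [← ENNReal.tsum_mul_left, ← ENNReal.tsum_mul_left]
      refine tsum_congr fun n => ?_
      rw [← ENNReal.ofReal_mul (by positivity), ← ENNReal.ofReal_mul hπ.le]
      congr 1
      ring
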